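/- For every integer d ≥ 3 there exists a constant C(d) > 0 with the following property. For every n ≥ 1, every d-tensor T on ℝ^n, and every degree-(2d) pseudo-expectation L over the hypercube {−1,1}^{dn} in the d·n variables x^{(1)}_1,…,x^{(1)}_n,…,x^{(d)}_1,…,x^{(d)}_n, one has L(∑_{i₁,…,i_d} T_{i₁…i_d} x^{(1)}_{i₁}⋯x^{(d)}_{i_d}) ≤ C(d) · n^{d/2 − 1} · max over x^{(1)},…,x^{(d)} ∈ {−1,1}^n of ∑_{i₁,…,i_d} T_{i₁…i_d} x^{(1)}_{i₁}⋯x^{(d)}_{i_d}. -/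

import Mathlib

open MvPolynomial

namespace SG
open Finset

noncomputable section

def pm (b : Bool) : ℝ := if b then 1 else -1

lemma pm_true : pm true = 1 := rfl
lemma pm_false : pm false = -1 := rfl
lemma pm_mul_self (b : Bool) : pm b * pm b = 1 := by cases b <;> norm_num [pm]
lemma pm_sq (b : Bool) : pm b ^ 2 = 1 := by cases b <;> norm_num [pm]
lemma abs_pm (b : Bool) : |pm b| = 1 := by cases b <;> norm_num [pm]
lemma pm_decide (x : ℝ) : pm (decide (0 ≤ x)) * x = |x| := by
  by_cases h : 0 ≤ x
  · simp [h, pm, abs_of_nonneg h]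
  · simp [h, pm, abs_of_neg (lt_of_not_ge h)]
lemma pm_mul_le_abs (b : Bool) (x : ℝ) : pm b * x ≤ |x| := by
  cases b <;> simp [pm] <;> [skip; exact le_abs_self x]
  exact neg_le_abs x

variable {κ κ' α β : Type*} [Fintype κ] [Fintype κ'] [Fintype α] [Fintype β]

def avg (f : κ → ℝ) : ℝ := (∑ x, f x) / (Fintype.card κ)

lemma card_cast_ne [Nonempty κ] : (Fintype.card κ : ℝ) ≠ 0 := by
  exact_mod_cast Fintype.card_ne_zero

lemma avg_const [Nonempty κ] (c : ℝ) : avg (fun _ : κ => c) = c := by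
  rw [avg, Finset.sum_const, Finset.card_univ, nsmul_eq_mul, mul_comm, mul_div_assoc,
    div_self card_cast_ne, mul_one]

lemma avg_nonneg {f : κ → ℝ} (h : ∀ x, 0 ≤ f x) : 0 ≤ avg f :=
  div_nonneg (Finset.sum_nonneg fun i _ => h i) (by positivity)

lemma avg_le_avg {f g : κ → ℝ} (h : ∀ x, f x ≤ g x) : avg f ≤ avg g := by
  unfold avg
  rcases Nat.eq_zero_or_pos (Fintype.card κ) with hc | hc
  · simp [hc]
  · rw [div_le_div_iff_of_pos_right (by exact_mod_cast hc)]
    exact Finset.sum_le_sum fun i _ => h i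

lemma avg_add {f g : κ → ℝ} : avg (fun x => f x + g x) = avg f + avg g := by
  rw [avg, avg, avg, Finset.sum_add_distrib, add_div]

lemma avg_mul_left (c : ℝ) (f : κ → ℝ) : avg (fun x => c * f x) = c * avg f := by
  rw [avg, avg, ← Finset.mul_sum, mul_div_assoc]

lemma avg_sum {ι : Type*} (s : Finset ι) (F : ι → κ → ℝ) :
    avg (fun x => ∑ i ∈ s, F i x) = ∑ i ∈ s, avg (F i) := by
  rw [avg, Finset.sum_comm, Finset.sum_div]
  rfl

lemma avg_equiv (e : κ ≃ κ') (f : κ' → ℝ) : avg (fun x => f (e x)) = avg f := by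
  rw [avg, avg, Equiv.sum_comp e f, Fintype.card_congr e]

lemma avg_prod (f : α × β → ℝ) : avg f = avg (fun a => avg (fun b => f (a, b))) := by
  rw [avg, Fintype.sum_prod_type, Fintype.card_prod, Nat.cast_mul]
  rw [show (avg fun a => avg fun b => f (a, b)) =
      (∑ a, (∑ b, f (a, b)) / (Fintype.card β : ℝ)) / (Fintype.card α : ℝ) from rfl]
  rw [← Finset.sum_div, div_div, mul_comm]

lemma exists_avg_le [Nonempty κ] (f : κ → ℝ) : ∃ x, avg f ≤ f x := by
  by_contra h
  push_neg at h
  have h2 : avg f < avg (fun _ : κ => avg f) := by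
    rw [avg, avg]
    rcases Nat.eq_zero_or_pos (Fintype.card κ) with hc | hc
    · exact absurd hc (by simpa using Fintype.card_ne_zero)
    · rw [div_lt_div_iff_of_pos_right (by exact_mod_cast hc)]
      exact Finset.sum_lt_sum_of_nonempty univ_nonempty fun i _ => h i
  rw [avg_const] at h2
  exact lt_irrefl _ h2


lemma avg_swap (f : α → β → ℝ) :
    avg (fun a => avg (fun b => f a b)) = avg (fun b => avg (fun a => f a b)) := by
  unfold avg
  rw [← Finset.sum_div, ← Finset.sum_div, div_div, div_div, Finset.sum_comm, mul_comm]

lemma avg_bool (f : Bool → ℝ) : avg f = (f true + f false) / 2 := by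
  simp [avg, Fintype.sum_bool]

lemma avg_pi_succ {m : ℕ} (f : (Fin (m + 1) → β) → ℝ) :
    avg f = avg (fun b : β => avg (fun s : Fin m → β => f (Fin.cons b s))) := by
  rw [← avg_equiv (Fin.consEquiv (fun _ : Fin (m+1) => β)) f, avg_prod]
  rfl

lemma avg_sq_nonneg (f : κ → ℝ) : 0 ≤ avg (fun x => f x ^ 2) :=
  avg_nonneg fun x => sq_nonneg _

lemma avg_mul_le (f g : κ → ℝ) :
    avg (fun x => f x * g x) ≤
      Real.sqrt (avg (fun x => f x ^ 2)) * Real.sqrt (avg (fun x => g x ^ 2)) := by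
  have h1 : (avg (fun x => f x * g x)) ^ 2 ≤
      avg (fun x => f x ^ 2) * avg (fun x => g x ^ 2) := by
    rw [avg, avg, avg, div_pow, div_mul_div_comm, ← sq]
    rcases Nat.eq_zero_or_pos (Fintype.card κ) with hc | hc
    · simp [hc]
    · rw [div_le_div_iff_of_pos_right (by positivity)]
      exact Finset.sum_mul_sq_le_sq_mul_sq univ f g
  calc avg (fun x => f x * g x) ≤ |avg (fun x => f x * g x)| := le_abs_self _
    _ = Real.sqrt ((avg (fun x => f x * g x)) ^ 2) := (Real.sqrt_sq_eq_abs _).symm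
    _ ≤ Real.sqrt (avg (fun x => f x ^ 2) * avg (fun x => g x ^ 2)) := Real.sqrt_le_sqrt h1
    _ = _ := Real.sqrt_mul (avg_sq_nonneg f) _

lemma sum_holder (f : κ → ℝ) :
    (∑ x, f x ^ 2) ^ 3 ≤ (∑ x, |f x|) ^ 2 * (∑ x, f x ^ 4) := by
  have hcb : (∑ x, f x ^ 2) ^ 2 ≤ (∑ x, |f x|) * (∑ x, |f x| ^ 3) := by
    have h := Finset.sum_mul_sq_le_sq_mul_sq univ
      (fun x => Real.sqrt (|f x|)) (fun x => Real.sqrt (|f x| ^ 3))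
    have he : ∀ x : κ, Real.sqrt (|f x|) * Real.sqrt (|f x| ^ 3) = f x ^ 2 := by
      intro x
      rw [← Real.sqrt_mul (abs_nonneg _), ← pow_succ']
      rw [show |f x| ^ 4 = (f x ^ 2) ^ 2 by rw [← abs_pow, ← pow_mul, abs_of_nonneg (by positivity : (0:ℝ) ≤ f x ^ 4)]]
      exact Real.sqrt_sq (by positivity)
    simp only [he, Real.sq_sqrt (abs_nonneg _),
      Real.sq_sqrt (pow_nonneg (abs_nonneg _) 3)] at h
    exact h
  have hbe : (∑ x, |f x| ^ 3) ^ 2 ≤ (∑ x, f x ^ 2) * (∑ x, f x ^ 4) := by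
    have h := Finset.sum_mul_sq_le_sq_mul_sq univ
      (fun x => |f x|) (fun x => f x ^ 2)
    have he : ∀ x : κ, |f x| * f x ^ 2 = |f x| ^ 3 := by
      intro x
      rw [show f x ^ 2 = |f x| ^ 2 from (sq_abs _).symm, ← pow_succ']
    have he2 : ∀ x : κ, (f x ^ 2) ^ 2 = f x ^ 4 := fun x => by ring
    simp only [he, sq_abs, he2] at h
    exact h
  have h2 : (0:ℝ) ≤ ∑ x, f x ^ 2 := Finset.sum_nonneg fun x _ => sq_nonneg _
  have h4 : (0:ℝ) ≤ ∑ x, f x ^ 4 := Finset.sum_nonneg fun x _ => by positivity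
  have h1 : (0:ℝ) ≤ ∑ x, |f x| := Finset.sum_nonneg fun x _ => abs_nonneg _
  rcases h2.lt_or_eq with hz | hz
  · have step1 : ((∑ x, f x ^ 2) ^ 2) ^ 2 ≤ ((∑ x, |f x|) * (∑ x, |f x| ^ 3)) ^ 2 :=
      pow_le_pow_left₀ (by positivity) hcb 2
    have step3 : (∑ x, |f x|) ^ 2 * (∑ x, |f x| ^ 3) ^ 2 ≤
        (∑ x, |f x|) ^ 2 * ((∑ x, f x ^ 2) * (∑ x, f x ^ 4)) :=
      mul_le_mul_of_nonneg_left hbe (by positivity)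
    have key : (∑ x, f x ^ 2) ^ 3 * (∑ x, f x ^ 2) ≤
        ((∑ x, |f x|) ^ 2 * (∑ x, f x ^ 4)) * (∑ x, f x ^ 2) := by nlinarith [step1, step3]
    exact le_of_mul_le_mul_right key hz
  · rw [← hz]
    have : (0:ℝ) ≤ (∑ x, |f x|) ^ 2 * (∑ x, f x ^ 4) := by positivity
    simpa using this

lemma avg_holder (f : κ → ℝ) :
    (avg (fun x => f x ^ 2)) ^ 3 ≤ (avg (fun x => |f x|)) ^ 2 * avg (fun x => f x ^ 4) := by
  rw [avg, avg, avg, div_pow, div_pow, div_mul_div_comm]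
  rcases Nat.eq_zero_or_pos (Fintype.card κ) with hc | hc
  · simp [hc]
  · rw [show ((Fintype.card κ : ℝ)) ^ 2 * (Fintype.card κ : ℝ) = (Fintype.card κ : ℝ) ^ 3 by ring]
    rw [div_le_div_iff_of_pos_right (by positivity)]
    exact sum_holder f

def rad {m : ℕ} (w : Fin m → ℝ) (s : Fin m → Bool) : ℝ := ∑ k, w k * pm (s k)

lemma rad_cons {m : ℕ} (w : Fin (m + 1) → ℝ) (b : Bool) (s : Fin m → Bool) :
    rad w (Fin.cons b s) = w 0 * pm b + rad (fun k => w k.succ) s := by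
  rw [rad, Fin.sum_univ_succ]
  simp [rad]

lemma radE2 : ∀ {m : ℕ} (w : Fin m → ℝ),
    avg (fun s => (rad w s) ^ 2) = ∑ k, (w k) ^ 2 := by
  intro m
  induction m with
  | zero => intro w; simp [rad, avg]
  | succ m ih =>
    intro w
    rw [avg_pi_succ, avg_bool]
    simp only [rad_cons]
    rw [← avg_add]
    have he : (fun s : Fin m → Bool =>
        (w 0 * pm true + rad (fun k => w k.succ) s) ^ 2 +
        (w 0 * pm false + rad (fun k => w k.succ) s) ^ 2) =
        fun s => 2 * (w 0 ^ 2) + 2 * ((rad (fun k => w k.succ) s) ^ 2) := by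
      funext s
      rw [pm_true, pm_false]
      ring
    rw [he, avg_add, avg_const, avg_mul_left, ih (fun k => w k.succ), Fin.sum_univ_succ]
    ring

lemma radE4 : ∀ {m : ℕ} (w : Fin m → ℝ),
    avg (fun s => (rad w s) ^ 4) ≤ 3 * (∑ k, (w k) ^ 2) ^ 2 := by
  intro m
  induction m with
  | zero => intro w; simp [rad, avg]
  | succ m ih =>
    intro w
    rw [avg_pi_succ, avg_bool]
    simp only [rad_cons]
    rw [← avg_add]
    have he : (fun s : Fin m → Bool =>
        (w 0 * pm true + rad (fun k => w k.succ) s) ^ 4 +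
        (w 0 * pm false + rad (fun k => w k.succ) s) ^ 4) =
        fun s => 2 * (w 0 ^ 4) + 12 * (w 0 ^ 2) * ((rad (fun k => w k.succ) s) ^ 2)
          + 2 * ((rad (fun k => w k.succ) s) ^ 4) := by
      funext s
      rw [pm_true, pm_false]
      ring
    rw [he, avg_add, avg_add, avg_const, avg_mul_left, avg_mul_left,
      radE2 (fun k => w k.succ)]
    have h2 : (0:ℝ) ≤ ∑ k : Fin m, (w k.succ) ^ 2 := Finset.sum_nonneg fun k _ => sq_nonneg _
    rw [Fin.sum_univ_succ]
    nlinarith [ih (fun k => w k.succ), sq_nonneg (w 0)]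

lemma sum_pi_succ {k : ℕ} {M : Type*} [AddCommMonoid M] (F : (Fin (k + 1) → β) → M) :
    ∑ g, F g = ∑ b : β, ∑ h : Fin k → β, F (Fin.cons b h) := by
  rw [← Equiv.sum_comp (Fin.consEquiv (fun _ : Fin (k + 1) => β)) F, Fintype.sum_prod_type]
  rfl

def chaos {k n : ℕ} (S : (Fin k → Fin n) → ℝ) (δ : Fin k → Fin n → Bool) : ℝ :=
  ∑ g, S g * ∏ a, pm (δ a (g a))

lemma chaos_cons {k n : ℕ} (S : (Fin (k + 1) → Fin n) → ℝ) (sb : Fin n → Bool)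
    (δ' : Fin k → Fin n → Bool) :
    chaos S (Fin.cons sb δ') = rad (fun i => chaos (fun h => S (Fin.cons i h)) δ') sb := by
  rw [chaos, sum_pi_succ, rad]
  apply Finset.sum_congr rfl
  intro i _
  rw [chaos, Finset.sum_mul]
  apply Finset.sum_congr rfl
  intro h _
  rw [Fin.prod_univ_succ]
  simp only [Fin.cons_zero, Fin.cons_succ]
  ring

lemma chaosE2 : ∀ {k n : ℕ} (S : (Fin k → Fin n) → ℝ),
    avg (fun δ => (chaos S δ) ^ 2) = ∑ g, S g ^ 2 := by
  intro k
  induction k with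
  | zero =>
    intro n S
    simp [chaos, avg]
  | succ k ih =>
    intro n S
    rw [avg_pi_succ (β := Fin n → Bool) (fun δ => (chaos S δ) ^ 2)]
    have h1 : (fun sb : Fin n → Bool =>
        avg (fun δ' : Fin k → Fin n → Bool => (chaos S (Fin.cons sb δ')) ^ 2)) =
        fun sb => avg (fun δ' : Fin k → Fin n → Bool =>
          (rad (fun i => chaos (fun h => S (Fin.cons i h)) δ') sb) ^ 2) := by
      funext sb
      simp only [chaos_cons]
    rw [h1, avg_swap]
    have h2 : (fun δ' : Fin k → Fin n → Bool =>
        avg (fun sb : Fin n → Bool =>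
          (rad (fun i => chaos (fun h => S (Fin.cons i h)) δ') sb) ^ 2)) =
        fun δ' => ∑ i, (chaos (fun h => S (Fin.cons i h)) δ') ^ 2 := by
      funext δ'
      exact radE2 _
    rw [h2, avg_sum univ (fun i δ' => (chaos (fun h => S (Fin.cons i h)) δ') ^ 2)]
    rw [sum_pi_succ (fun g => S g ^ 2)]
    exact Finset.sum_congr rfl fun i _ => ih _

lemma chaosE4 : ∀ {k n : ℕ} (S : (Fin k → Fin n) → ℝ),
    avg (fun δ => (chaos S δ) ^ 4) ≤ 3 ^ k * (∑ g, S g ^ 2) ^ 2 := by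
  intro k
  induction k with
  | zero =>
    intro n S
    simp [chaos, avg]
    exact le_of_eq (by ring)
  | succ k ih =>
    intro n S
    have hqnn : ∀ i : Fin n, (0:ℝ) ≤ ∑ h, S (Fin.cons i h) ^ 2 :=
      fun i => Finset.sum_nonneg fun h _ => sq_nonneg _
    rw [avg_pi_succ (β := Fin n → Bool) (fun δ => (chaos S δ) ^ 4)]
    have h1 : (fun sb : Fin n → Bool =>
        avg (fun δ' : Fin k → Fin n → Bool => (chaos S (Fin.cons sb δ')) ^ 4)) =
        fun sb => avg (fun δ' : Fin k → Fin n → Bool =>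
          (rad (fun i => chaos (fun h => S (Fin.cons i h)) δ') sb) ^ 4) := by
      funext sb
      simp only [chaos_cons]
    rw [h1, avg_swap]
    calc avg (fun δ' : Fin k → Fin n → Bool =>
          avg (fun sb : Fin n → Bool =>
            (rad (fun i => chaos (fun h => S (Fin.cons i h)) δ') sb) ^ 4))
        ≤ avg (fun δ' : Fin k → Fin n → Bool =>
            3 * (∑ i, (chaos (fun h => S (Fin.cons i h)) δ') ^ 2) ^ 2) :=
          avg_le_avg (fun δ' => radE4 _)
      _ = 3 * avg (fun δ' : Fin k → Fin n → Bool =>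
            (∑ i, (chaos (fun h => S (Fin.cons i h)) δ') ^ 2) ^ 2) := avg_mul_left 3 _
      _ = 3 * ∑ i, ∑ j, avg (fun δ' : Fin k → Fin n → Bool =>
            (chaos (fun h => S (Fin.cons i h)) δ') ^ 2 *
            (chaos (fun h => S (Fin.cons j h)) δ') ^ 2) := by
          congr 1
          have hpt : (fun δ' : Fin k → Fin n → Bool =>
              (∑ i, (chaos (fun h => S (Fin.cons i h)) δ') ^ 2) ^ 2) =
              fun δ' => ∑ i, ∑ j, (chaos (fun h => S (Fin.cons i h)) δ') ^ 2 *
                (chaos (fun h => S (Fin.cons j h)) δ') ^ 2 := by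
            funext δ'
            rw [sq, Finset.sum_mul_sum]
          rw [hpt, avg_sum]
          exact Finset.sum_congr rfl fun i _ => avg_sum _ _
      _ ≤ 3 * ∑ i, ∑ j, (Real.sqrt (3 ^ k) * ∑ h, S (Fin.cons i h) ^ 2) *
            (Real.sqrt (3 ^ k) * ∑ h, S (Fin.cons j h) ^ 2) := by
          apply mul_le_mul_of_nonneg_left _ (by norm_num)
          apply Finset.sum_le_sum
          intro i _
          apply Finset.sum_le_sum
          intro j _
          have hb : ∀ l : Fin n, Real.sqrt (avg (fun δ' : Fin k → Fin n → Bool =>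
              ((chaos (fun h => S (Fin.cons l h)) δ') ^ 2) ^ 2)) ≤
              Real.sqrt (3 ^ k) * ∑ h, S (Fin.cons l h) ^ 2 := by
            intro l
            have he : (fun δ' : Fin k → Fin n → Bool =>
                ((chaos (fun h => S (Fin.cons l h)) δ') ^ 2) ^ 2) =
                fun δ' => (chaos (fun h => S (Fin.cons l h)) δ') ^ 4 := by
              funext δ'
              ring
            rw [he]
            calc Real.sqrt (avg (fun δ' : Fin k → Fin n → Bool =>
                  (chaos (fun h => S (Fin.cons l h)) δ') ^ 4))
                ≤ Real.sqrt (3 ^ k * (∑ h, S (Fin.cons l h) ^ 2) ^ 2) :=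
                  Real.sqrt_le_sqrt (ih _)
              _ = Real.sqrt (3 ^ k) * ∑ h, S (Fin.cons l h) ^ 2 := by
                  rw [Real.sqrt_mul (by positivity), Real.sqrt_sq (hqnn l)]
          calc avg (fun δ' : Fin k → Fin n → Bool =>
                (chaos (fun h => S (Fin.cons i h)) δ') ^ 2 *
                (chaos (fun h => S (Fin.cons j h)) δ') ^ 2)
              ≤ Real.sqrt (avg (fun δ' : Fin k → Fin n → Bool =>
                  ((chaos (fun h => S (Fin.cons i h)) δ') ^ 2) ^ 2)) *
                Real.sqrt (avg (fun δ' : Fin k → Fin n → Bool =>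
                  ((chaos (fun h => S (Fin.cons j h)) δ') ^ 2) ^ 2)) := avg_mul_le _ _
            _ ≤ _ := by
                apply mul_le_mul (hb i) (hb j) (Real.sqrt_nonneg _)
                positivity
      _ = 3 ^ (k + 1) * (∑ g, S g ^ 2) ^ 2 := by
          rw [← Finset.sum_mul_sum, sum_pi_succ (fun g => S g ^ 2)]
          have h3 : (0:ℝ) ≤ 3 ^ k := by positivity
          have hs : Real.sqrt ((3:ℝ) ^ k) * Real.sqrt ((3:ℝ) ^ k) = (3:ℝ) ^ k :=
            Real.mul_self_sqrt h3
          rw [← Finset.mul_sum]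
          linear_combination
            (3 * (∑ b : Fin n, ∑ h : Fin k → Fin n, S (Fin.cons b h) ^ 2) ^ 2) * hs

lemma chaos_abs {k n : ℕ} (S : (Fin k → Fin n) → ℝ) :
    Real.sqrt (∑ g, S g ^ 2) / Real.sqrt (3 ^ k) ≤ avg (fun δ => |chaos S δ|) := by
  have hA : 0 ≤ avg (fun δ : Fin k → Fin n → Bool => |chaos S δ|) :=
    avg_nonneg fun δ => abs_nonneg _
  have hc2 : (0:ℝ) ≤ ∑ g, S g ^ 2 := Finset.sum_nonneg fun g _ => sq_nonneg _
  rcases hc2.lt_or_eq with hz | hz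
  · have hh := avg_holder (fun δ : Fin k → Fin n → Bool => chaos S δ)
    rw [chaosE2 S] at hh
    have h4 := chaosE4 S
    have hkey : (∑ g, S g ^ 2) ^ 3 ≤
        (avg (fun δ : Fin k → Fin n → Bool => |chaos S δ|)) ^ 2 *
          (3 ^ k * (∑ g, S g ^ 2) ^ 2) := by
      calc (∑ g, S g ^ 2) ^ 3
          ≤ (avg (fun δ : Fin k → Fin n → Bool => |chaos S δ|)) ^ 2 *
            avg (fun δ : Fin k → Fin n → Bool => (chaos S δ) ^ 4) := hh
        _ ≤ _ := mul_le_mul_of_nonneg_left h4 (by positivity)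
    have hq : (∑ g, S g ^ 2) / 3 ^ k ≤
        (avg (fun δ : Fin k → Fin n → Bool => |chaos S δ|)) ^ 2 := by
      rw [div_le_iff₀ (by positivity)]
      have h2 : (0:ℝ) < (∑ g, S g ^ 2) ^ 2 := by positivity
      apply le_of_mul_le_mul_right _ h2
      calc (∑ g, S g ^ 2) * (∑ g, S g ^ 2) ^ 2 = (∑ g, S g ^ 2) ^ 3 := by ring
        _ ≤ (avg (fun δ : Fin k → Fin n → Bool => |chaos S δ|)) ^ 2 *
            (3 ^ k * (∑ g, S g ^ 2) ^ 2) := hkey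
        _ = (avg (fun δ : Fin k → Fin n → Bool => |chaos S δ|)) ^ 2 * 3 ^ k *
            (∑ g, S g ^ 2) ^ 2 := by ring
    calc Real.sqrt (∑ g, S g ^ 2) / Real.sqrt (3 ^ k)
        = Real.sqrt ((∑ g, S g ^ 2) / 3 ^ k) := by
          rw [Real.sqrt_div hc2]
      _ ≤ Real.sqrt ((avg (fun δ : Fin k → Fin n → Bool => |chaos S δ|)) ^ 2) :=
          Real.sqrt_le_sqrt hq
      _ = _ := Real.sqrt_sq hA
  · rw [← hz]
    simp [hA]

lemma avg_sub {f g : κ → ℝ} : avg (fun x => f x - g x) = avg f - avg g := by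
  rw [avg, avg, avg, Finset.sum_sub_distrib, sub_div]

lemma rad_add {m : ℕ} (u v : Fin m → ℝ) (r : Fin m → Bool) :
    rad (fun x => u x + v x) r = rad u r + rad v r := by
  rw [rad, rad, rad, ← Finset.sum_add_distrib]
  exact Finset.sum_congr rfl fun x _ => by ring

lemma rad_sub {m : ℕ} (u v : Fin m → ℝ) (r : Fin m → Bool) :
    rad (fun x => u x - v x) r = rad u r - rad v r := by
  rw [rad, rad, rad, ← Finset.sum_sub_distrib]
  exact Finset.sum_congr rfl fun x _ => by ring

lemma rad_inner {m : ℕ} (u v : Fin m → ℝ) :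
    avg (fun r => rad u r * rad v r) = ∑ x, u x * v x := by
  have hpt : (fun r : Fin m → Bool => rad u r * rad v r) =
      fun r => ((rad (fun x => u x + v x) r) ^ 2 - (rad (fun x => u x - v x) r) ^ 2) / 4 := by
    funext r
    rw [rad_add, rad_sub]
    ring
  rw [hpt]
  have h4 : (fun r : Fin m → Bool =>
      ((rad (fun x => u x + v x) r) ^ 2 - (rad (fun x => u x - v x) r) ^ 2) / 4) =
      fun r => (1/4) * ((rad (fun x => u x + v x) r) ^ 2 - (rad (fun x => u x - v x) r) ^ 2) := by
    funext r
    ring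
  rw [h4, avg_mul_left, avg_sub, radE2, radE2]
  rw [← Finset.sum_sub_distrib]
  rw [show ∑ x, ((u x + v x) ^ 2 - (u x - v x) ^ 2) = ∑ x, 4 * (u x * v x) from
    Finset.sum_congr rfl fun x _ => by ring, ← Finset.mul_sum]
  ring

section Grothendieck

variable {ι₁ ι₂ : Type*} [Fintype ι₁] [Fintype ι₂]

def grSet (A : ι₁ → ι₂ → ℝ) : Set ℝ :=
  {t | ∃ m : ℕ, ∃ u : ι₁ → Fin m → ℝ, ∃ v : ι₂ → Fin m → ℝ,
    (∀ i, ∑ x, (u i x) ^ 2 ≤ 1) ∧ (∀ j, ∑ x, (v j x) ^ 2 ≤ 1) ∧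
    t = ∑ i, ∑ j, A i j * (∑ x, u i x * v j x)}

lemma zero_mem_grSet (A : ι₁ → ι₂ → ℝ) : (0:ℝ) ∈ grSet A := by
  refine ⟨0, fun _ _ => 0, fun _ _ => 0, ?_, ?_, ?_⟩ <;> simp

lemma inner_abs_le_one {m : ℕ} (u v : Fin m → ℝ) (hu : ∑ x, u x ^ 2 ≤ 1)
    (hv : ∑ x, v x ^ 2 ≤ 1) : |∑ x, u x * v x| ≤ 1 := by
  have h := Finset.sum_mul_sq_le_sq_mul_sq univ u v
  have h1 : (∑ x, u x * v x) ^ 2 ≤ 1 := by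
    calc (∑ x, u x * v x) ^ 2 ≤ (∑ x, u x ^ 2) * ∑ x, v x ^ 2 := h
      _ ≤ 1 := by
        have h0 : (0:ℝ) ≤ ∑ x, v x ^ 2 := Finset.sum_nonneg fun x _ => sq_nonneg _
        calc (∑ x, u x ^ 2) * ∑ x, v x ^ 2 ≤ 1 * ∑ x, v x ^ 2 :=
            mul_le_mul_of_nonneg_right hu h0
          _ ≤ 1 := by rw [one_mul]; exact hv
  calc |∑ x, u x * v x| = Real.sqrt ((∑ x, u x * v x) ^ 2) := (Real.sqrt_sq_eq_abs _).symm
    _ ≤ Real.sqrt 1 := Real.sqrt_le_sqrt h1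
    _ = 1 := Real.sqrt_one

lemma grSet_bddAbove (A : ι₁ → ι₂ → ℝ) : BddAbove (grSet A) := by
  refine ⟨∑ i, ∑ j, |A i j|, ?_⟩
  rintro t ⟨m, u, v, hu, hv, rfl⟩
  apply Finset.sum_le_sum
  intro i _
  apply Finset.sum_le_sum
  intro j _
  calc A i j * (∑ x, u i x * v j x) ≤ |A i j * (∑ x, u i x * v j x)| := le_abs_self _
    _ = |A i j| * |∑ x, u i x * v j x| := abs_mul _ _
    _ ≤ |A i j| * 1 := mul_le_mul_of_nonneg_left (inner_abs_le_one _ _ (hu i) (hv j)) (abs_nonneg _)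
    _ = |A i j| := mul_one _

lemma mem_grSet_of_fintype (A : ι₁ → ι₂ → ℝ) {κ : Type} [Fintype κ]
    (u : ι₁ → κ → ℝ) (v : ι₂ → κ → ℝ)
    (hu : ∀ i, ∑ x, (u i x) ^ 2 ≤ 1) (hv : ∀ j, ∑ x, (v j x) ^ 2 ≤ 1) :
    (∑ i, ∑ j, A i j * (∑ x, u i x * v j x)) ∈ grSet A := by
  classical
  obtain e := Fintype.equivFin κ
  refine ⟨Fintype.card κ, fun i x => u i (e.symm x), fun j x => v j (e.symm x), ?_, ?_, ?_⟩
  · intro i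
    rw [Equiv.sum_comp e.symm (fun y => u i y ^ 2)]
    exact hu i
  · intro j
    rw [Equiv.sum_comp e.symm (fun y => v j y ^ 2)]
    exact hv j
  · apply Finset.sum_congr rfl
    intro i _
    apply Finset.sum_congr rfl
    intro j _
    rw [Equiv.sum_comp e.symm (fun y => u i y * v j y)]

end Grothendieck

def clamp (t : ℝ) : ℝ := max (-8) (min 8 t)

lemma clamp_abs_le (t : ℝ) : |clamp t| ≤ 8 := by
  rw [abs_le]
  constructor
  · exact le_max_left _ _
  · exact max_le (by norm_num) (min_le_left _ _)

lemma clamp_sq_le (t : ℝ) : (clamp t) ^ 2 ≤ t ^ 2 := by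
  unfold clamp
  rcases le_total t (-8) with h | h
  · rw [min_eq_right (by linarith), max_eq_left h]
    nlinarith
  · rcases le_total 8 t with h2 | h2
    · rw [min_eq_left h2, max_eq_right (by norm_num : (-8:ℝ) ≤ 8)]
      nlinarith
    · rw [min_eq_right h2, max_eq_right h]

lemma clamp_tail_sq (t : ℝ) : (t - clamp t) ^ 2 ≤ t ^ 4 / 64 := by
  unfold clamp
  rcases le_total t (-8) with h | h
  · rw [min_eq_right (by linarith), max_eq_left h]
    have h64 : 64 ≤ t ^ 2 := by nlinarith
    nlinarith [sq_nonneg t, mul_le_mul_of_nonneg_left h64 (sq_nonneg t)]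
  · rcases le_total 8 t with h2 | h2
    · rw [min_eq_left h2, max_eq_right (by norm_num : (-8:ℝ) ≤ 8)]
      have h64 : 64 ≤ t ^ 2 := by nlinarith
      nlinarith [sq_nonneg t, mul_le_mul_of_nonneg_left h64 (sq_nonneg t)]
    · rw [min_eq_right h2, max_eq_right h]
      have h0 : (t - t) ^ 2 = 0 := by ring
      rw [h0]
      positivity

section Grothendieck2

variable {ι₁ ι₂ : Type*} [Fintype ι₁] [Fintype ι₂]

lemma box_bound (A : ι₁ → ι₂ → ℝ) (B : ℝ)
    (hB : ∀ (ε : ι₁ → Bool) (η : ι₂ → Bool),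
      (∑ i, ∑ j, A i j * (pm (ε i) * pm (η j))) ≤ B)
    (a : ι₁ → ℝ) (b : ι₂ → ℝ) (ha : ∀ i, |a i| ≤ 8) (hb : ∀ j, |b j| ≤ 8) :
    ∑ i, ∑ j, A i j * (a i * b j) ≤ 64 * B := by
  classical
  set c : ι₂ → ℝ := fun j => ∑ i, A i j * a i with hc
  set η : ι₂ → Bool := fun j => decide (0 ≤ c j) with hη
  set d : ι₁ → ℝ := fun i => ∑ j, A i j * pm (η j) with hd
  set ε : ι₁ → Bool := fun i => decide (0 ≤ d i) with hε
  have h1 : ∑ i, ∑ j, A i j * (a i * b j) = ∑ j, c j * b j := by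
    rw [Finset.sum_comm]
    apply Finset.sum_congr rfl
    intro j _
    rw [hc, Finset.sum_mul]
    exact Finset.sum_congr rfl fun i _ => by ring
  have h2 : ∑ j, c j * b j ≤ 8 * ∑ j, |c j| := by
    rw [Finset.mul_sum]
    apply Finset.sum_le_sum
    intro j _
    calc c j * b j ≤ |c j * b j| := le_abs_self _
      _ = |c j| * |b j| := abs_mul _ _
      _ ≤ |c j| * 8 := mul_le_mul_of_nonneg_left (hb j) (abs_nonneg _)
      _ = 8 * |c j| := mul_comm _ _
  have h3 : ∑ j, |c j| = ∑ i, a i * d i := by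
    calc ∑ j, |c j| = ∑ j, pm (η j) * c j :=
          Finset.sum_congr rfl fun j _ => (pm_decide (c j)).symm
      _ = ∑ j, ∑ i, pm (η j) * (A i j * a i) := by
          apply Finset.sum_congr rfl
          intro j _
          rw [hc, Finset.mul_sum]
      _ = ∑ i, ∑ j, pm (η j) * (A i j * a i) := Finset.sum_comm
      _ = ∑ i, a i * d i := by
          apply Finset.sum_congr rfl
          intro i _
          rw [hd, Finset.mul_sum]
          exact Finset.sum_congr rfl fun j _ => by ring
  have h4 : ∑ i, a i * d i ≤ 8 * ∑ i, |d i| := by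
    rw [Finset.mul_sum]
    apply Finset.sum_le_sum
    intro i _
    calc a i * d i ≤ |a i * d i| := le_abs_self _
      _ = |a i| * |d i| := abs_mul _ _
      _ ≤ 8 * |d i| := mul_le_mul_of_nonneg_right (ha i) (abs_nonneg _)
  have h5 : ∑ i, |d i| = ∑ i, ∑ j, A i j * (pm (ε i) * pm (η j)) := by
    apply Finset.sum_congr rfl
    intro i _
    calc |d i| = pm (ε i) * d i := (pm_decide (d i)).symm
      _ = ∑ j, A i j * (pm (ε i) * pm (η j)) := by
          rw [hd, Finset.mul_sum]
          exact Finset.sum_congr rfl fun j _ => by ring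
  calc ∑ i, ∑ j, A i j * (a i * b j) = ∑ j, c j * b j := h1
    _ ≤ 8 * ∑ j, |c j| := h2
    _ = 8 * ∑ i, a i * d i := by rw [h3]
    _ ≤ 8 * (8 * ∑ i, |d i|) := by
        apply mul_le_mul_of_nonneg_left h4 (by norm_num)
    _ = 64 * ∑ i, |d i| := by ring
    _ = 64 * ∑ i, ∑ j, A i j * (pm (ε i) * pm (η j)) := by rw [h5]
    _ ≤ 64 * B := mul_le_mul_of_nonneg_left (hB ε η) (by norm_num)

lemma pair_bound (A : ι₁ → ι₂ → ℝ) {κ : Type} [Fintype κ] (p : ι₁ → κ → ℝ) (q : ι₂ → κ → ℝ)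
    (a b : ℝ) (ha : 0 < a) (hb : 0 < b)
    (hp : ∀ i, avg (fun r => p i r ^ 2) ≤ a ^ 2) (hq : ∀ j, avg (fun r => q j r ^ 2) ≤ b ^ 2) :
    ∑ i, ∑ j, A i j * avg (fun r => p i r * q j r) ≤ a * b * sSup (grSet A) := by
  classical
  set w : ℝ := Real.sqrt ((Fintype.card κ : ℝ))⁻¹ with hw
  have hw2 : w ^ 2 = ((Fintype.card κ : ℝ))⁻¹ := Real.sq_sqrt (by positivity)
  have key : ∀ (f g : κ → ℝ), ∑ r, (w * f r) * (w * g r) = avg (fun r => f r * g r) := by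
    intro f g
    rw [avg, div_eq_mul_inv, mul_comm, ← hw2]
    rw [Finset.mul_sum]
    exact Finset.sum_congr rfl fun r _ => by ring
  have hpu : ∀ i, ∑ r, ((w * p i r) / a) ^ 2 ≤ 1 := by
    intro i
    have : ∑ r, ((w * p i r) / a) ^ 2 = (avg (fun r => p i r ^ 2)) / a ^ 2 := by
      have hsq : avg (fun r => p i r ^ 2) = avg (fun r => p i r * p i r) := by
        congr 1
        funext r
        ring
      rw [hsq, ← key (p i) (p i), Finset.sum_div]
      exact Finset.sum_congr rfl fun r _ => by ring
    rw [this, div_le_one (by positivity)]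
    exact hp i
  have hqv : ∀ j, ∑ r, ((w * q j r) / b) ^ 2 ≤ 1 := by
    intro j
    have : ∑ r, ((w * q j r) / b) ^ 2 = (avg (fun r => q j r ^ 2)) / b ^ 2 := by
      have hsq : avg (fun r => q j r ^ 2) = avg (fun r => q j r * q j r) := by
        congr 1
        funext r
        ring
      rw [hsq, ← key (q j) (q j), Finset.sum_div]
      exact Finset.sum_congr rfl fun r _ => by ring
    rw [this, div_le_one (by positivity)]
    exact hq j
  have hmem := mem_grSet_of_fintype A (fun i r => (w * p i r) / a) (fun j r => (w * q j r) / b)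
    hpu hqv
  have hle := le_csSup (grSet_bddAbove A) hmem
  have hval : ∑ i, ∑ j, A i j * avg (fun r => p i r * q j r)
      = (a * b) * ∑ i, ∑ j, A i j * (∑ r, ((w * p i r) / a) * ((w * q j r) / b)) := by
    rw [Finset.mul_sum]
    apply Finset.sum_congr rfl
    intro i _
    rw [Finset.mul_sum]
    apply Finset.sum_congr rfl
    intro j _
    have hr : ∑ r, ((w * p i r) / a) * ((w * q j r) / b)
        = (avg (fun r => p i r * q j r)) / (a * b) := by
      rw [← key]
      rw [Finset.sum_div]
      exact Finset.sum_congr rfl fun r _ => by ring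
    rw [hr]
    field_simp
  rw [hval]
  exact mul_le_mul_of_nonneg_left hle (by positivity)

end Grothendieck2

section Grothendieck3

variable {ι₁ ι₂ : Type*} [Fintype ι₁] [Fintype ι₂]

theorem grothendieck (A : ι₁ → ι₂ → ℝ) (B : ℝ)
    (hB : ∀ (ε : ι₁ → Bool) (η : ι₂ → Bool),
      (∑ i, ∑ j, A i j * (pm (ε i) * pm (η j))) ≤ B) :
    ∀ t ∈ grSet A, t ≤ 128 * B := by
  classical
  have hne : (grSet A).Nonempty := ⟨0, zero_mem_grSet A⟩
  have hbdd := grSet_bddAbove A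
  have hγ0 : 0 ≤ sSup (grSet A) := le_csSup hbdd (zero_mem_grSet A)
  have hδpos : (0:ℝ) < Real.sqrt 3 / 8 := by positivity
  have hδ2 : (Real.sqrt 3 / 8) ^ 2 = 3 / 64 := by
    rw [div_pow, Real.sq_sqrt (by norm_num : (0:ℝ) ≤ 3)]
    norm_num
  have key : ∀ t ∈ grSet A, t ≤ 64 * B + (2 * (Real.sqrt 3 / 8)) * sSup (grSet A) := by
    rintro t ⟨m, u, v, hu, hv, rfl⟩
    have hinner : ∀ (i : ι₁) (j : ι₂), (∑ x, u i x * v j x) =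
        avg (fun r => rad (u i) r * rad (v j) r) :=
      fun i j => (rad_inner (u i) (v j)).symm
    have hsplit : ∀ (i : ι₁) (j : ι₂), avg (fun r => rad (u i) r * rad (v j) r)
        = avg (fun r => clamp (rad (u i) r) * clamp (rad (v j) r))
        + avg (fun r => (rad (u i) r - clamp (rad (u i) r)) * rad (v j) r)
        + avg (fun r => clamp (rad (u i) r) * (rad (v j) r - clamp (rad (v j) r))) := by
      intro i j
      rw [← avg_add, ← avg_add]
      congr 1
      funext r
      ring
    have hX2 : ∀ i, avg (fun r => rad (u i) r ^ 2) ≤ 1 := by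
      intro i
      rw [radE2]
      exact hu i
    have hY2 : ∀ j, avg (fun r => rad (v j) r ^ 2) ≤ 1 := by
      intro j
      rw [radE2]
      exact hv j
    have hsum_sq_nonneg : ∀ (w : Fin m → ℝ), (0:ℝ) ≤ ∑ x, w x ^ 2 :=
      fun w => Finset.sum_nonneg fun x _ => sq_nonneg _
    have hX4 : ∀ i, avg (fun r => rad (u i) r ^ 4) ≤ 3 := by
      intro i
      calc avg (fun r => rad (u i) r ^ 4) ≤ 3 * (∑ x, u i x ^ 2) ^ 2 := radE4 _
        _ ≤ 3 * 1 := by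
            apply mul_le_mul_of_nonneg_left _ (by norm_num)
            exact pow_le_one₀ (hsum_sq_nonneg _) (hu i)
        _ = 3 := mul_one 3
    have hY4 : ∀ j, avg (fun r => rad (v j) r ^ 4) ≤ 3 := by
      intro j
      calc avg (fun r => rad (v j) r ^ 4) ≤ 3 * (∑ x, v j x ^ 2) ^ 2 := radE4 _
        _ ≤ 3 * 1 := by
            apply mul_le_mul_of_nonneg_left _ (by norm_num)
            exact pow_le_one₀ (hsum_sq_nonneg _) (hv j)
        _ = 3 := mul_one 3
    have htailX : ∀ i, avg (fun r => (rad (u i) r - clamp (rad (u i) r)) ^ 2) ≤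
        (Real.sqrt 3 / 8) ^ 2 := by
      intro i
      rw [hδ2]
      calc avg (fun r => (rad (u i) r - clamp (rad (u i) r)) ^ 2)
          ≤ avg (fun r => (1/64) * rad (u i) r ^ 4) := by
            apply avg_le_avg
            intro r
            have := clamp_tail_sq (rad (u i) r)
            linarith
        _ = (1/64) * avg (fun r => rad (u i) r ^ 4) := avg_mul_left _ _
        _ ≤ (1/64) * 3 := mul_le_mul_of_nonneg_left (hX4 i) (by norm_num)
        _ = 3 / 64 := by norm_num
    have htailY : ∀ j, avg (fun r => (rad (v j) r - clamp (rad (v j) r)) ^ 2) ≤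
        (Real.sqrt 3 / 8) ^ 2 := by
      intro j
      rw [hδ2]
      calc avg (fun r => (rad (v j) r - clamp (rad (v j) r)) ^ 2)
          ≤ avg (fun r => (1/64) * rad (v j) r ^ 4) := by
            apply avg_le_avg
            intro r
            have := clamp_tail_sq (rad (v j) r)
            linarith
        _ = (1/64) * avg (fun r => rad (v j) r ^ 4) := avg_mul_left _ _
        _ ≤ (1/64) * 3 := mul_le_mul_of_nonneg_left (hY4 j) (by norm_num)
        _ = 3 / 64 := by norm_num
    have hclampX2 : ∀ i, avg (fun r => clamp (rad (u i) r) ^ 2) ≤ (1:ℝ) ^ 2 := by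
      intro i
      rw [one_pow]
      exact le_trans (avg_le_avg fun r => clamp_sq_le _) (hX2 i)
    have hclampY2 : ∀ j, avg (fun r => clamp (rad (v j) r) ^ 2) ≤ (1:ℝ) ^ 2 := by
      intro j
      rw [one_pow]
      exact le_trans (avg_le_avg fun r => clamp_sq_le _) (hY2 j)
    have hval : ∑ i, ∑ j, A i j * (∑ x, u i x * v j x)
        = (∑ i, ∑ j, A i j * avg (fun r => clamp (rad (u i) r) * clamp (rad (v j) r)))
        + ((∑ i, ∑ j, A i j * avg (fun r => (rad (u i) r - clamp (rad (u i) r)) * rad (v j) r))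
        + (∑ i, ∑ j, A i j * avg (fun r => clamp (rad (u i) r) * (rad (v j) r - clamp (rad (v j) r))))) := by
      have hrow : ∀ i : ι₁, ∑ j, A i j * (∑ x, u i x * v j x)
          = (∑ j, A i j * avg (fun r => clamp (rad (u i) r) * clamp (rad (v j) r)))
          + ((∑ j, A i j * avg (fun r => (rad (u i) r - clamp (rad (u i) r)) * rad (v j) r))
          + (∑ j, A i j * avg (fun r => clamp (rad (u i) r) * (rad (v j) r - clamp (rad (v j) r))))) := by
        intro i
        rw [← Finset.sum_add_distrib, ← Finset.sum_add_distrib]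
        apply Finset.sum_congr rfl
        intro j _
        rw [hinner i j, hsplit i j]
        ring
      rw [Finset.sum_congr rfl (fun i _ => hrow i), Finset.sum_add_distrib,
        Finset.sum_add_distrib]
    have hT1 : ∑ i, ∑ j, A i j * avg (fun r => clamp (rad (u i) r) * clamp (rad (v j) r))
        ≤ 64 * B := by
      have heq : ∑ i, ∑ j, A i j * avg (fun r => clamp (rad (u i) r) * clamp (rad (v j) r))
          = avg (fun r : Fin m → Bool =>
              ∑ i, ∑ j, A i j * (clamp (rad (u i) r) * clamp (rad (v j) r))) := by
        rw [avg_sum]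
        apply Finset.sum_congr rfl
        intro i _
        rw [avg_sum]
        apply Finset.sum_congr rfl
        intro j _
        rw [← avg_mul_left]
      rw [heq]
      calc avg (fun r : Fin m → Bool =>
              ∑ i, ∑ j, A i j * (clamp (rad (u i) r) * clamp (rad (v j) r)))
          ≤ avg (fun _ : Fin m → Bool => 64 * B) := by
            apply avg_le_avg
            intro r
            exact box_bound A B hB _ _ (fun i => clamp_abs_le _) (fun j => clamp_abs_le _)
        _ = 64 * B := avg_const _
    have hT2 : ∑ i, ∑ j, A i j *
        avg (fun r => (rad (u i) r - clamp (rad (u i) r)) * rad (v j) r)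
        ≤ (Real.sqrt 3 / 8) * 1 * sSup (grSet A) := by
      apply pair_bound A _ _ _ _ hδpos one_pos htailX
      intro j
      rw [one_pow]
      exact hY2 j
    have hT3 : ∑ i, ∑ j, A i j *
        avg (fun r => clamp (rad (u i) r) * (rad (v j) r - clamp (rad (v j) r)))
        ≤ 1 * (Real.sqrt 3 / 8) * sSup (grSet A) := by
      exact pair_bound A _ _ _ _ one_pos hδpos hclampX2 htailY
    rw [hval]
    have := add_le_add hT1 (add_le_add hT2 hT3)
    calc _ ≤ (64 * B) + ((Real.sqrt 3 / 8) * 1 * sSup (grSet A)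
        + 1 * (Real.sqrt 3 / 8) * sSup (grSet A)) := this
      _ = 64 * B + (2 * (Real.sqrt 3 / 8)) * sSup (grSet A) := by ring
  have hγle : sSup (grSet A) ≤ 64 * B + (2 * (Real.sqrt 3 / 8)) * sSup (grSet A) :=
    csSup_le hne key
  have hs3 : Real.sqrt 3 ≤ 2 := by
    rw [show (2:ℝ) = Real.sqrt 4 from by
      rw [show (4:ℝ) = 2 ^ 2 by norm_num, Real.sqrt_sq (by norm_num : (0:ℝ) ≤ 2)]]
    exact Real.sqrt_le_sqrt (by norm_num)
  have hδhalf : 2 * (Real.sqrt 3 / 8) ≤ 1 / 2 := by linarith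
  intro t ht
  have ht' : t ≤ sSup (grSet A) := le_csSup hbdd ht
  nlinarith [mul_le_mul_of_nonneg_right hδhalf hγ0, hγle, ht', hγ0]

end Grothendieck3

lemma sum_abs_le_sqrt_card {κ : Type*} [Fintype κ] (x : κ → ℝ) :
    ∑ h, |x h| ≤ Real.sqrt (Fintype.card κ) * Real.sqrt (∑ h, x h ^ 2) := by
  have h1 : (∑ h, |x h|) ^ 2 ≤ (Fintype.card κ : ℝ) * ∑ h, |x h| ^ 2 := by
    exact_mod_cast sq_sum_le_card_mul_sum_sq (s := univ) (f := fun h => |x h|)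
  have h2 : (∑ h : κ, |x h| ^ 2) = ∑ h, x h ^ 2 :=
    Finset.sum_congr rfl fun h _ => sq_abs _
  rw [h2] at h1
  calc ∑ h, |x h| = Real.sqrt ((∑ h, |x h|) ^ 2) :=
        (Real.sqrt_sq (Finset.sum_nonneg fun h _ => abs_nonneg _)).symm
    _ ≤ Real.sqrt ((Fintype.card κ : ℝ) * ∑ h, x h ^ 2) := Real.sqrt_le_sqrt h1
    _ = _ := Real.sqrt_mul (by positivity) _

end

end SG

open SG Finset

/-- **Integrality gap of the degree-`2d` SoS relaxation of decoupled degree-`d`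
polynomial maximization over the hypercube is `O(n^{d/2−1})`.** For each `d ≥ 3` there
is `C(d) > 0` such that every degree-`2d` pseudo-expectation over `{±1}^{dn}` in the
variables indexed by `Fin d × Fin n` assigns the decoupled degree-`d` objective at most
`C(d) · n^{d/2−1}` times its true maximum over the hypercube. -/
theorem stmt_18 (d : ℕ) (hd : 3 ≤ d) :
    ∃ C : ℝ, 0 < C ∧ ∀ (n : ℕ), 1 ≤ n → ∀ (T : (Fin d → Fin n) → ℝ)
      (L : MvPolynomial (Fin d × Fin n) ℝ →ₗ[ℝ] ℝ),
      L 1 = 1 →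
      (∀ p : MvPolynomial (Fin d × Fin n) ℝ, 2 * p.totalDegree ≤ 2 * d → 0 ≤ L (p ^ 2)) →
      (∀ (v : Fin d × Fin n) (p : MvPolynomial (Fin d × Fin n) ℝ),
        p.totalDegree ≤ 2 * d - 2 → L ((X v) ^ 2 * p) = L p) →
      L (∑ f : Fin d → Fin n, MvPolynomial.C (T f) * ∏ a, X (a, f a)) ≤
        C * (n : ℝ) ^ ((d : ℝ) / 2 - 1) *
          ⨆ x : Fin d → Fin n → Bool,
            ∑ f : Fin d → Fin n, T f * ∏ a, (if x a (f a) then (1 : ℝ) else -1) := by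
  classical
  obtain ⟨k, rfl⟩ : ∃ k, d = k + 2 := ⟨d - 2, by omega⟩
  refine ⟨128 * Real.sqrt (3 ^ (k + 2)), by positivity, ?_⟩
  intro n hn T L hL1 hLsq hLsub
  set Su : ℝ := ⨆ x : Fin (k + 2) → Fin n → Bool,
      ∑ f : Fin (k + 2) → Fin n, T f * ∏ a, (if x a (f a) then (1 : ℝ) else -1) with hSu
  set FF : (Fin (k + 2) → Fin n → Bool) → ℝ := fun x =>
      ∑ f : Fin (k + 2) → Fin n, T f * ∏ a, (if x a (f a) then (1 : ℝ) else -1) with hFF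
  have hFFle : ∀ x, FF x ≤ Su := by
    intro x
    exact le_ciSup (Set.Finite.bddAbove (Set.finite_range FF)) x
  -- FF rewritten with pm and cons decomposition
  have hFFpm : ∀ (ε η : Fin n → Bool) (δ : Fin k → Fin n → Bool),
      FF (Fin.cons ε (Fin.cons η δ)) =
      ∑ i : Fin n, ∑ j : Fin n, ∑ h : Fin k → Fin n,
        T (Fin.cons i (Fin.cons j h)) *
          (pm (ε i) * (pm (η j) * ∏ a : Fin k, pm (δ a (h a)))) := by
    intro ε η δ
    rw [hFF]
    have hpm : ∀ b : Bool, (if b then (1:ℝ) else -1) = pm b := fun b => rfl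
    simp only [hpm]
    rw [sum_pi_succ (fun f : Fin (k + 2) → Fin n =>
      T f * ∏ a, pm ((Fin.cons ε (Fin.cons η δ) : Fin (k + 2) → Fin n → Bool) a (f a)))]
    apply Finset.sum_congr rfl
    intro i _
    rw [sum_pi_succ (fun g : Fin (k + 1) → Fin n =>
      T (Fin.cons i g) * ∏ a, pm ((Fin.cons ε (Fin.cons η δ) : Fin (k + 2) → Fin n → Bool) a
        ((Fin.cons i g : Fin (k + 2) → Fin n) a)))]
    apply Finset.sum_congr rfl
    intro j _
    apply Finset.sum_congr rfl
    intro h _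
    rw [Fin.prod_univ_succ, Fin.prod_univ_succ]
    simp only [Fin.cons_zero, Fin.cons_succ]
  have hS0 : 0 ≤ Su := by
    have h01 : FF (Fin.cons (fun _ => true) (Fin.cons (fun _ => true) (fun _ _ => true)))
        + FF (Fin.cons (fun _ => false) (Fin.cons (fun _ => true) (fun _ _ => true))) = 0 := by
      rw [hFFpm, hFFpm, ← Finset.sum_add_distrib]
      apply Finset.sum_eq_zero
      intro i _
      rw [← Finset.sum_add_distrib]
      apply Finset.sum_eq_zero
      intro j _
      rw [← Finset.sum_add_distrib]
      apply Finset.sum_eq_zero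
      intro h _
      simp only [pm_true, pm_false]
      ring
    have ha := hFFle (Fin.cons (fun _ => true) (Fin.cons (fun _ => true) (fun _ _ => true)))
    have hb := hFFle (Fin.cons (fun _ => false) (Fin.cons (fun _ => true) (fun _ _ => true)))
    linarith
  -- the matrix
  set A : Fin n → ((Fin (k + 1) → Fin n)) → ℝ := fun i g => T (Fin.cons i g) with hA
  -- sign bound
  have hB : ∀ (ε : Fin n → Bool) (η : (Fin (k + 1) → Fin n) → Bool),
      (∑ i, ∑ g, A i g * (pm (ε i) * pm (η g))) ≤
        Real.sqrt ((n:ℝ) ^ k) * Real.sqrt (3 ^ k) * Su := by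
    intro ε η
    set Sg : (Fin (k + 1) → Fin n) → ℝ := fun g => ∑ i, A i g * pm (ε i) with hSg
    have h1 : (∑ i, ∑ g, A i g * (pm (ε i) * pm (η g))) ≤ ∑ g, |Sg g| := by
      rw [Finset.sum_comm]
      apply Finset.sum_le_sum
      intro g _
      calc ∑ i, A i g * (pm (ε i) * pm (η g)) = pm (η g) * Sg g := by
            rw [hSg, Finset.mul_sum]
            exact Finset.sum_congr rfl fun i _ => by ring
        _ ≤ |Sg g| := pm_mul_le_abs _ _
    set Xc : Fin n → (Fin k → Fin n → Bool) → ℝ :=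
      fun j δ => chaos (fun h => Sg (Fin.cons j h)) δ with hXc
    have h2 : ∑ g, |Sg g| ≤ Real.sqrt ((n:ℝ) ^ k) * Real.sqrt (3 ^ k) *
        ∑ j, avg (fun δ => |Xc j δ|) := by
      rw [sum_pi_succ (fun g : Fin (k + 1) → Fin n => |Sg g|)]
      rw [show Real.sqrt ((n:ℝ) ^ k) * Real.sqrt (3 ^ k) * ∑ j, avg (fun δ => |Xc j δ|)
        = ∑ j, Real.sqrt ((n:ℝ) ^ k) * Real.sqrt (3 ^ k) * avg (fun δ => |Xc j δ|) from by
          rw [Finset.mul_sum]]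
      apply Finset.sum_le_sum
      intro j _
      have hcard : ((Fintype.card (Fin k → Fin n) : ℝ)) = (n:ℝ) ^ k := by
        simp
      calc ∑ h, |Sg (Fin.cons j h)|
          ≤ Real.sqrt ((n:ℝ) ^ k) * Real.sqrt (∑ h, Sg (Fin.cons j h) ^ 2) := by
            have hs := sum_abs_le_sqrt_card (fun h : Fin k → Fin n => Sg (Fin.cons j h))
            rwa [hcard] at hs
        _ ≤ Real.sqrt ((n:ℝ) ^ k) * (Real.sqrt (3 ^ k) * avg (fun δ => |Xc j δ|)) := by
            apply mul_le_mul_of_nonneg_left _ (Real.sqrt_nonneg _)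
            have hca := chaos_abs (fun h => Sg (Fin.cons j h))
            rw [div_le_iff₀ (by positivity)] at hca
            calc Real.sqrt (∑ h, Sg (Fin.cons j h) ^ 2)
                ≤ avg (fun δ => |chaos (fun h => Sg (Fin.cons j h)) δ|) * Real.sqrt (3 ^ k) :=
                  hca
              _ = Real.sqrt (3 ^ k) * avg (fun δ => |Xc j δ|) := by
                  rw [hXc, mul_comm]
        _ = Real.sqrt ((n:ℝ) ^ k) * Real.sqrt (3 ^ k) * avg (fun δ => |Xc j δ|) := by ring
    obtain ⟨δs, hδs⟩ := exists_avg_le (fun δ : Fin k → Fin n → Bool => ∑ j, |Xc j δ|)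
    have h3 : ∑ j, avg (fun δ : Fin k → Fin n → Bool => |Xc j δ|) ≤ ∑ j, |Xc j δs| := by
      rw [← avg_sum univ (fun j (δ : Fin k → Fin n → Bool) => |Xc j δ|)]
      exact hδs
    set η2 : Fin n → Bool := fun j => decide (0 ≤ Xc j δs) with hη2
    have h4 : FF (Fin.cons ε (Fin.cons η2 δs)) = ∑ j, pm (η2 j) * Xc j δs := by
      rw [hFFpm]
      rw [Finset.sum_comm]
      apply Finset.sum_congr rfl
      intro j _
      rw [Finset.sum_comm]
      simp only [hXc, chaos]
      rw [Finset.mul_sum]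
      apply Finset.sum_congr rfl
      intro h _
      rw [hSg, Finset.sum_mul, Finset.mul_sum]
      apply Finset.sum_congr rfl
      intro i _
      rw [hA]
      ring
    have h5 : ∑ j, |Xc j δs| = FF (Fin.cons ε (Fin.cons η2 δs)) := by
      rw [h4]
      exact Finset.sum_congr rfl fun j _ => (pm_decide _).symm
    calc (∑ i, ∑ g, A i g * (pm (ε i) * pm (η g))) ≤ ∑ g, |Sg g| := h1
      _ ≤ Real.sqrt ((n:ℝ) ^ k) * Real.sqrt (3 ^ k) * ∑ j, avg (fun δ => |Xc j δ|) := h2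
      _ ≤ Real.sqrt ((n:ℝ) ^ k) * Real.sqrt (3 ^ k) * ∑ j, |Xc j δs| := by
          apply mul_le_mul_of_nonneg_left h3 (by positivity)
      _ = Real.sqrt ((n:ℝ) ^ k) * Real.sqrt (3 ^ k) * FF (Fin.cons ε (Fin.cons η2 δs)) := by
          rw [h5]
      _ ≤ Real.sqrt ((n:ℝ) ^ k) * Real.sqrt (3 ^ k) * Su := by
          apply mul_le_mul_of_nonneg_left (hFFle _) (by positivity)
  -- the pseudoexpectation value is in grSet A
  have hmem : L (∑ f : Fin (k + 2) → Fin n, MvPolynomial.C (T f) * ∏ a, X (a, f a)) ∈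
      grSet A := by
    set mono : (Fin n ⊕ (Fin (k + 1) → Fin n)) → MvPolynomial (Fin (k + 2) × Fin n) ℝ :=
      Sum.elim (fun i => X (((0 : Fin (k + 2)), i)))
        (fun g => ∏ a : Fin (k + 1), X ((a.succ, g a))) with hmono
    have hdeg : ∀ α, (mono α).totalDegree ≤ k + 1 := by
      intro α
      cases α with
      | inl i =>
        simp only [hmono, Sum.elim_inl]
        rw [totalDegree_X]
        omega
      | inr g =>
        simp only [hmono, Sum.elim_inr]
        calc (∏ a : Fin (k + 1), (X ((a.succ, g a)) : MvPolynomial (Fin (k + 2) × Fin n) ℝ)).totalDegree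
            ≤ ∑ a : Fin (k + 1), (X ((a.succ, g a)) : MvPolynomial (Fin (k + 2) × Fin n) ℝ).totalDegree :=
              totalDegree_finset_prod _ _
          _ = ∑ _a : Fin (k + 1), 1 := by
              apply Finset.sum_congr rfl
              intro a _
              rw [totalDegree_X]
          _ = k + 1 := by simp
    have hdiag : ∀ α, L (mono α * mono α) = 1 := by
      intro α
      cases α with
      | inl i =>
        have hsub := hLsub (((0 : Fin (k + 2)), i)) 1 (by rw [totalDegree_one]; omega)
        rw [mul_one] at hsub
        simp only [hmono, Sum.elim_inl]
        rw [← sq, hsub, hL1]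
      | inr g =>
        have key : ∀ s : Finset (Fin (k + 1)),
            L ((∏ a ∈ s, (X ((a.succ, g a)) : MvPolynomial (Fin (k + 2) × Fin n) ℝ)) ^ 2) = 1 := by
          intro s
          induction s using Finset.induction_on with
          | empty => simpa using hL1
          | @insert a s' hx ih =>
            rw [Finset.prod_insert hx, mul_pow]
            have hdegp : ((∏ b ∈ s', (X ((b.succ, g b)) : MvPolynomial (Fin (k + 2) × Fin n) ℝ)) ^ 2).totalDegree
                ≤ 2 * (k + 2) - 2 := by
              calc ((∏ b ∈ s', (X ((b.succ, g b)) : MvPolynomial (Fin (k + 2) × Fin n) ℝ)) ^ 2).totalDegree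
                  ≤ 2 * (∏ b ∈ s', (X ((b.succ, g b)) : MvPolynomial (Fin (k + 2) × Fin n) ℝ)).totalDegree :=
                    totalDegree_pow _ _
                _ ≤ 2 * ∑ b ∈ s', (X ((b.succ, g b)) : MvPolynomial (Fin (k + 2) × Fin n) ℝ).totalDegree := by
                    apply Nat.mul_le_mul_left
                    exact totalDegree_finset_prod _ _
                _ ≤ 2 * ∑ _b ∈ s', 1 := by
                    apply Nat.mul_le_mul_left
                    apply Finset.sum_le_sum
                    intro b _
                    rw [totalDegree_X]
                _ ≤ 2 * (k + 2) - 2 := by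
                    rw [Finset.sum_const, smul_eq_mul, mul_one]
                    have := Finset.card_le_univ s'
                    simp only [Finset.card_univ, Fintype.card_fin] at this
                    omega
            rw [hLsub _ _ hdegp]
            exact ih
        simp only [hmono, Sum.elim_inr]
        rw [← sq]
        exact key univ
    set P : Matrix (Fin n ⊕ (Fin (k + 1) → Fin n)) (Fin n ⊕ (Fin (k + 1) → Fin n)) ℝ :=
      fun α β => L (mono α * mono β) with hP
    have hPsd : P.PosSemidef := by
      refine Matrix.PosSemidef.of_dotProduct_mulVec_nonneg ?_ ?_
      · show P.conjTranspose = P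
        ext α β
        rw [Matrix.conjTranspose_apply]
        simp only [Matrix.conjTranspose_apply, hP, star_trivial]
        rw [mul_comm]
      · intro c
        have hq : dotProduct (star c) (P.mulVec c) =
            L ((∑ α, MvPolynomial.C (c α) * mono α) ^ 2) := by
          rw [sq, Finset.sum_mul_sum, map_sum]
          rw [dotProduct]
          apply Finset.sum_congr rfl
          intro α _
          rw [map_sum]
          rw [Matrix.mulVec, dotProduct, star_trivial, Finset.mul_sum]
          apply Finset.sum_congr rfl
          intro β _
          have hterm : (MvPolynomial.C (c α) * mono α) * (MvPolynomial.C (c β) * mono β)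
              = (c α * c β) • (mono α * mono β) := by
            rw [MvPolynomial.smul_eq_C_mul, map_mul]
            ring
          rw [hterm, map_smul, smul_eq_mul, hP]
          simp only [star_trivial]
          ring
        rw [hq]
        have hdq : 2 * (∑ α, MvPolynomial.C (c α) * mono α).totalDegree ≤ 2 * (k + 2) := by
          have : (∑ α, MvPolynomial.C (c α) * mono α).totalDegree ≤ k + 1 := by
            apply le_trans (totalDegree_finset_sum _ _)
            apply Finset.sup_le
            intro α _
            apply le_trans (totalDegree_mul _ _)
            rw [totalDegree_C]
            simpa using hdeg α
          omega
        exact hLsq _ hdq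
    obtain ⟨m, Bm, hBm⟩ := Matrix.posSemidef_iff_eq_sum_vecMulVec.mp hPsd
    have hent : ∀ α β, P α β = ∑ x, Bm x α * Bm x β := by
      intro α β
      rw [hBm]
      simp only [Matrix.sum_apply, Matrix.vecMulVec_apply, Pi.star_apply, star_trivial]
    have hLval : L (∑ f : Fin (k + 2) → Fin n, MvPolynomial.C (T f) * ∏ a, X (a, f a)) =
        ∑ i, ∑ g, A i g * (∑ x, Bm x (Sum.inl i) * Bm x (Sum.inr g)) := by
      rw [map_sum]
      rw [sum_pi_succ (fun f : Fin (k + 2) → Fin n =>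
        L (MvPolynomial.C (T f) * ∏ a, X ((a, f a))))]
      apply Finset.sum_congr rfl
      intro i _
      apply Finset.sum_congr rfl
      intro g _
      have hprod : (∏ a : Fin (k + 2),
          (X ((a, (Fin.cons i g : Fin (k + 2) → Fin n) a)) : MvPolynomial (Fin (k + 2) × Fin n) ℝ))
          = mono (Sum.inl i) * mono (Sum.inr g) := by
        rw [Fin.prod_univ_succ]
        simp only [Fin.cons_zero, Fin.cons_succ, hmono, Sum.elim_inl, Sum.elim_inr]
      rw [hprod]
      rw [show MvPolynomial.C (T (Fin.cons i g)) * (mono (Sum.inl i) * mono (Sum.inr g))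
        = T (Fin.cons i g) • (mono (Sum.inl i) * mono (Sum.inr g)) from
        (MvPolynomial.smul_eq_C_mul _ _).symm]
      rw [map_smul, smul_eq_mul]
      rw [show L (mono (Sum.inl i) * mono (Sum.inr g)) = P (Sum.inl i) (Sum.inr g) from rfl]
      rw [hent, hA]
    rw [hLval]
    apply mem_grSet_of_fintype
    · intro i
      have hsq : ∑ x, Bm x (Sum.inl i) ^ 2 = P (Sum.inl i) (Sum.inl i) := by
        rw [hent]
        exact Finset.sum_congr rfl fun x _ => sq (Bm x (Sum.inl i))
      rw [hsq]
      exact (hdiag _).le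
    · intro g
      have hsq : ∑ x, Bm x (Sum.inr g) ^ 2 = P (Sum.inr g) (Sum.inr g) := by
        rw [hent]
        exact Finset.sum_congr rfl fun x _ => sq (Bm x (Sum.inr g))
      rw [hsq]
      exact (hdiag _).le
  have hgro := grothendieck A (Real.sqrt ((n:ℝ) ^ k) * Real.sqrt (3 ^ k) * Su) hB _ hmem
  have hpow : (n : ℝ) ^ ((((k:ℕ) + 2 : ℕ) : ℝ) / 2 - 1) = Real.sqrt ((n:ℝ) ^ k) := by
    have hn0 : (0:ℝ) ≤ (n:ℝ) := by positivity
    rw [show ((((k:ℕ) + 2 : ℕ) : ℝ) / 2 - 1) = ((k:ℕ) : ℝ) * (1/2) by push_cast; ring]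
    rw [Real.rpow_mul hn0, Real.rpow_natCast]
    rw [Real.sqrt_eq_rpow]
  calc L (∑ f : Fin (k + 2) → Fin n, MvPolynomial.C (T f) * ∏ a, X (a, f a))
      ≤ 128 * (Real.sqrt ((n:ℝ) ^ k) * Real.sqrt (3 ^ k) * Su) := hgro
    _ ≤ 128 * (Real.sqrt ((n:ℝ) ^ k) * Real.sqrt (3 ^ (k + 2)) * Su) := by
        apply mul_le_mul_of_nonneg_left _ (by norm_num)
        apply mul_le_mul_of_nonneg_right _ hS0
        apply mul_le_mul_of_nonneg_left _ (Real.sqrt_nonneg _)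
        apply Real.sqrt_le_sqrt
        apply pow_le_pow_right₀ (by norm_num)
        omega
    _ = 128 * Real.sqrt (3 ^ (k + 2)) * (n : ℝ) ^ ((((k:ℕ) + 2 : ℕ) : ℝ) / 2 - 1) * Su := by
        rw [hpow]
        ring
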